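/- Every hereditary class of finite undirected graphs closed under free amalgamation over arbitrary vertex subsets contains, for every n, the 1-subdivision of the complete graph K_n (provided it contains a single edge); consequently such a class is not quasi-wide. -/

import Mathlib

/-- A bundled finite graph. -/
structure BG where
  V : Type
  [fin : Fintype V]
  G : SimpleGraph V

attribute [instance] BG.fin

/-- `C` is hereditary: closed under induced subgraphs (graph embeddings). -/
def GHereditary (C : Set BG) : Prop :=
  ∀ A ∈ C, ∀ (W : Type) [Fintype W] (H : SimpleGraph W), (H ↪g A.G) → (⟨W, H⟩ : BG) ∈ C

/-- `C` is closed under free amalgamation over arbitrary vertex subsets: for `A, B ∈ C`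
sharing a common induced subgraph `S` (via injections `f, g` inducing the same graph on
`S`), the class `C` contains the free amalgam `A ⊕_S B`, characterised up to isomorphism
by the listed properties: `A` and `B` embed into it, agreeing exactly on `S`, they cover
it, and there are no edges between `A ∖ S` and `B ∖ S`. -/
def FreeAmalgamationClosed (C : Set BG) : Prop :=
  ∀ A ∈ C, ∀ B ∈ C, ∀ (S : Type) (f : S → A.V) (g : S → B.V),
    Function.Injective f → Function.Injective g →
    (∀ s t : S, A.G.Adj (f s) (f t) ↔ B.G.Adj (g s) (g t)) →
    ∃ D ∈ C, ∃ (jA : A.G ↪g D.G) (jB : B.G ↪g D.G),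
      (∀ s : S, jA (f s) = jB (g s)) ∧
      (∀ d : D.V, (∃ a, jA a = d) ∨ (∃ b, jB b = d)) ∧
      (∀ a b, jA a = jB b → ∃ s, a = f s ∧ b = g s) ∧
      (∀ a b, D.G.Adj (jA a) (jB b) → (∃ s, a = f s) ∨ (∃ s, b = g s))

/-- The 1-subdivision of the complete graph `K n`: each edge `{i, j}` of `K n` is
replaced by a path of length 2 through a new middle vertex. -/
def subdivK (n : ℕ) : SimpleGraph (Fin n ⊕ {p : Fin n × Fin n // p.1 < p.2}) :=
  SimpleGraph.fromRel (fun u v =>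
    match u, v with
    | Sum.inl i, Sum.inr p => i = p.1.1 ∨ i = p.1.2
    | _, _ => False)

/-- `C` is quasi-wide: for every radius `r` there are `k` and `f : ℕ → ℕ` such that in
any member of `C` of size at least `f m` one can delete at most `k` vertices so that the
rest contains an `r`-independent set of size `m` (any walk between two distinct chosen
vertices avoiding the deleted set has length greater than `r`). -/
def QuasiWide (C : Set BG) : Prop :=
  ∀ r : ℕ, ∃ (k : ℕ) (f : ℕ → ℕ), ∀ (m : ℕ), ∀ A ∈ C, f m ≤ Fintype.card A.V →
    ∃ (S : Finset A.V) (B : Finset A.V), Disjoint S B ∧ S.card ≤ k ∧ m ≤ B.card ∧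
      ∀ u ∈ B, ∀ v ∈ B, u ≠ v →
        ∀ p : A.G.Walk u v, (∀ x ∈ p.support, x ∉ S) → r < p.length

def P3 : SimpleGraph (Fin 3) :=
  SimpleGraph.fromRel (fun u v => (u = 0 ∧ v = 1) ∨ (u = 1 ∧ v = 2))
lemma exists_indep {C : Set BG} (hamal : FreeAmalgamationClosed C)
    (hedge : ∃ A ∈ C, ∃ u v, A.G.Adj u v) :
    ∀ N : ℕ, ∃ A ∈ C, ∃ v : Fin N → A.V,
    Function.Injective v ∧ ∀ i j, ¬ A.G.Adj (v i) (v j) := by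
  intro N
  induction N with
  | zero =>
    obtain ⟨A, hA, -⟩ := hedge
    exact ⟨A, hA, Fin.elim0, fun x => x.elim0, fun i => i.elim0⟩
  | succ N ih =>
    obtain ⟨A, hA, v, hvinj, hvadj⟩ := ih
    obtain ⟨A₀, hA₀, u, -, -⟩ := hedge
    obtain ⟨D, hD, jA, jB, -, -, hint, hcross⟩ :=
      hamal A hA A₀ hA₀ Empty (Empty.elim) (Empty.elim)
        (fun s => s.elim) (fun s => s.elim) (fun s => s.elim)
    refine ⟨D, hD, fun i => if h : (i : ℕ) < N then jA (v ⟨i, h⟩) else jB u, ?_, ?_⟩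
    · intro i j hij
      by_cases hi : (i : ℕ) < N <;> by_cases hj : (j : ℕ) < N <;>
        simp only [hi, hj, dif_pos, dif_neg, not_false_iff] at hij
      · have := hvinj (jA.injective hij)
        exact Fin.ext (by simpa using congrArg Fin.val this)
      · exact absurd (hint _ _ hij) (by simp)
      · exact absurd (hint _ _ hij.symm) (by simp)
      · exact Fin.ext (by omega)
    · intro i j hadj
      by_cases hi : (i : ℕ) < N <;> by_cases hj : (j : ℕ) < N <;>
        simp only [hi, hj, dif_pos, dif_neg, not_false_iff] at hadj
      · exact hvadj _ _ (jA.map_adj_iff.mp hadj)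
      · rcases hcross _ _ hadj with ⟨s, -⟩ | ⟨s, -⟩ <;> exact s.elim
      · rcases hcross _ _ hadj.symm with ⟨s, -⟩ | ⟨s, -⟩ <;> exact s.elim
      · exact (D.G.irrefl hadj)

lemma empty_mem {C : Set BG} (hher : GHereditary C) (hamal : FreeAmalgamationClosed C)
    (hedge : ∃ A ∈ C, ∃ u v, A.G.Adj u v)
    (W : Type) [Fintype W] (H : SimpleGraph W) (hno : ∀ u v, ¬ H.Adj u v) :
    (⟨W, H⟩ : BG) ∈ C := by
  obtain ⟨A, hA, v, hvinj, hvadj⟩ := exists_indep hamal hedge (Fintype.card W)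
  refine hher A hA W H ⟨⟨fun w => v (Fintype.equivFin W w), fun a b h => ?_⟩, ?_⟩
  · exact (Fintype.equivFin W).injective (hvinj h)
  · intro a b
    exact iff_of_false (hvadj _ _) (hno a b)


lemma K2_mem {C : Set BG} (hher : GHereditary C)
    (hedge : ∃ A ∈ C, ∃ u v, A.G.Adj u v) :
    (⟨Fin 2, ⊤⟩ : BG) ∈ C := by
  obtain ⟨A, hA, u, v, huv⟩ := hedge
  have hne := huv.ne
  refine hher A hA (Fin 2) ⊤ ⟨⟨fun i => if i = 0 then u else v, ?_⟩, ?_⟩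
  · intro a b h
    fin_cases a <;> fin_cases b <;> simp_all
  · intro a b
    show A.G.Adj (if a = 0 then u else v) (if b = 0 then u else v) ↔ (⊤ : SimpleGraph (Fin 2)).Adj a b
    simp only [SimpleGraph.top_adj]
    fin_cases a <;> fin_cases b <;> simp_all [huv.symm, A.G.irrefl]

lemma P3_mem {C : Set BG} (hher : GHereditary C) (hamal : FreeAmalgamationClosed C)
    (hedge : ∃ A ∈ C, ∃ u v, A.G.Adj u v) :
    (⟨Fin 3, P3⟩ : BG) ∈ C := by
  have hK2 := K2_mem hher hedge
  obtain ⟨D, hD, jA, jB, hagree, -, hint, hcross⟩ :=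
    hamal _ hK2 _ hK2 PUnit (fun _ => (1 : Fin 2)) (fun _ => (0 : Fin 2))
      (fun a b _ => rfl) (fun a b _ => rfl)
      (fun s t => iff_of_false (by simp) (by simp))
  have hy : jA 1 = jB 0 := hagree PUnit.unit
  have hxy_ne : jA 0 ≠ jA 1 := fun h => absurd (jA.injective h) (by simp)
  have hyz_ne : jA 1 ≠ jB 1 := by
    rw [hy]; exact fun h => absurd (jB.injective h) (by simp)
  have hxz_ne : jA 0 ≠ jB 1 := by
    intro h
    obtain ⟨s, hs1, hs2⟩ := hint _ _ h
    exact absurd hs1 (by simp)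
  have hxy : D.G.Adj (jA 0) (jA 1) := jA.map_adj_iff.mpr (by simp)
  have hyz : D.G.Adj (jA 1) (jB 1) := by
    rw [hy]; exact jB.map_adj_iff.mpr (by simp)
  have hxz : ¬ D.G.Adj (jA 0) (jB 1) := by
    intro h
    rcases hcross _ _ h with ⟨s, hs⟩ | ⟨s, hs⟩
    · exact absurd hs (by simp)
    · exact absurd hs (by simp)
  refine hher D hD (Fin 3) P3 ⟨⟨![jA 0, jA 1, jB 1], ?_⟩, ?_⟩
  · intro a b h
    fin_cases a <;> fin_cases b <;> simp at h ⊢ <;>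
      first
      | rfl
      | exact absurd h hxy_ne
      | exact absurd h.symm hxy_ne
      | exact absurd h hyz_ne
      | exact absurd h.symm hyz_ne
      | exact absurd h hxz_ne
      | exact absurd h.symm hxz_ne
  · intro a b
    fin_cases a <;> fin_cases b <;>
      simp only [Function.Embedding.coeFn_mk, Fin.isValue, Matrix.cons_val_zero,
        Matrix.cons_val_one, Matrix.head_cons, Matrix.cons_val_two, Matrix.tail_cons,
        Fin.mk_zero, Fin.mk_one, show ((⟨2, by norm_num⟩ : Fin 3)) = 2 from rfl] <;>
      first
      | exact iff_of_false (D.G.irrefl) (by simp [P3])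
      | exact iff_of_true hxy (by simp [P3])
      | exact iff_of_true hxy.symm (by simp [P3]; try decide)
      | exact iff_of_true hyz (by simp [P3]; try decide)
      | exact iff_of_true hyz.symm (by simp [P3]; try decide)
      | exact iff_of_false hxz (by simp [P3]; try decide)
      | exact iff_of_false (fun hh => hxz hh.symm) (by simp [P3]; try decide)
abbrev PP (n : ℕ) := {p : Fin n × Fin n // p.1 < p.2}

def psub (n : ℕ) (E : Finset (PP n)) : SimpleGraph (Fin n ⊕ {q : PP n // q ∈ E}) :=
  SimpleGraph.fromRel (fun u v =>
    match u, v with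
    | Sum.inl i, Sum.inr q => i = q.1.1.1 ∨ i = q.1.1.2
    | _, _ => False)

@[simp] lemma psub_adj_ll (n : ℕ) (E : Finset (PP n)) (i j : Fin n) :
    ¬ (psub n E).Adj (.inl i) (.inl j) := by
  simp [psub, SimpleGraph.fromRel_adj]

@[simp] lemma psub_adj_rr (n : ℕ) (E : Finset (PP n)) (q q') :
    ¬ (psub n E).Adj (.inr q) (.inr q') := by
  simp [psub, SimpleGraph.fromRel_adj]

@[simp] lemma psub_adj_lr (n : ℕ) (E : Finset (PP n)) (i : Fin n) (q) :
    (psub n E).Adj (.inl i) (.inr q) ↔ (i = q.1.1.1 ∨ i = q.1.1.2) := by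
  simp [psub, SimpleGraph.fromRel_adj]

@[simp] lemma psub_adj_rl (n : ℕ) (E : Finset (PP n)) (i : Fin n) (q) :
    (psub n E).Adj (.inr q) (.inl i) ↔ (i = q.1.1.1 ∨ i = q.1.1.2) := by
  rw [SimpleGraph.adj_comm]; simp

lemma psub_mem {C : Set BG} (hher : GHereditary C) (hamal : FreeAmalgamationClosed C)
    (hedge : ∃ A ∈ C, ∃ u v, A.G.Adj u v) (n : ℕ) (E : Finset (PP n)) :
    ∃ D ∈ C, Nonempty (psub n E ≃g D.G) := by
  classical
  induction E using Finset.induction_on with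
  | empty =>
    refine ⟨⟨Fin n ⊕ {q : PP n // q ∈ (∅ : Finset (PP n))}, psub n ∅⟩,
      empty_mem hher hamal hedge _ _ ?_, ⟨(SimpleGraph.Iso.refl : psub n ∅ ≃g psub n ∅)⟩⟩
    rintro (i | q) (j | q') h
    · exact psub_adj_ll n ∅ i j h
    · exact absurd q'.2 (Finset.notMem_empty _)
    · exact absurd q.2 (Finset.notMem_empty _)
    · exact psub_adj_rr n ∅ q q' h
  | @insert p E hp ih =>
    obtain ⟨D', hD', ⟨e⟩⟩ := ih
    have hP3 := P3_mem hher hamal hedge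
    have hne12 : p.1.1 ≠ p.1.2 := ne_of_lt p.2
    -- amalgamate P3 with D' over the two endpoints
    obtain ⟨D, hD, jA, jB, hagree, hsurj, hint, hcross⟩ :=
      hamal _ hP3 D' hD' (Fin 2) ![0, 2]
        ![e (.inl p.1.1), e (.inl p.1.2)]
        (by intro a b h; fin_cases a <;> fin_cases b <;> simp_all)
        (by
          intro a b h
          fin_cases a <;> fin_cases b <;> simp only [Matrix.cons_val_zero,
            Matrix.cons_val_one, Matrix.head_cons] at h <;>
            first
            | rfl
            | exact absurd (Sum.inl_injective (e.injective h)) hne12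
            | exact absurd (Sum.inl_injective (e.injective h.symm)) hne12)
        (by
          intro s t
          have hDll : ∀ i j : Fin n, ¬ D'.G.Adj (e (Sum.inl i)) (e (Sum.inl j)) :=
            fun i j h => psub_adj_ll n E i j (e.map_adj_iff.mp h)
          fin_cases s <;> fin_cases t <;>
            simp only [Fin.mk_zero, Fin.mk_one, Matrix.cons_val_zero, Matrix.cons_val_one,
              Matrix.head_cons] <;>
            exact iff_of_false (by simp [P3]; try decide) (hDll _ _))
    have h0 : jA 0 = jB (e (Sum.inl p.1.1)) := by simpa using hagree 0
    have h2 : jA 2 = jB (e (Sum.inl p.1.2)) := by simpa using hagree 1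
    have hint1 : ∀ b, jA 1 ≠ jB b := by
      intro b h
      obtain ⟨s, hs, -⟩ := hint _ _ h
      fin_cases s <;> simp_all
    have hBinj : ∀ w w', jB (e w) = jB (e w') → w = w' :=
      fun w w' h => e.injective (jB.injective h)
    have hBadj : ∀ w w', D.G.Adj (jB (e w)) (jB (e w')) ↔ (psub n E).Adj w w' := by
      intro w w'
      rw [jB.map_adj_iff, e.map_adj_iff]
    have hA1adj : ∀ w, D.G.Adj (jA 1) (jB (e w)) ↔
        (w = Sum.inl p.1.1 ∨ w = Sum.inl p.1.2) := by
      intro w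
      constructor
      · intro h
        rcases hcross _ _ h with ⟨s, hs⟩ | ⟨s, hs⟩
        · exact absurd hs (by fin_cases s <;> simp)
        · fin_cases s <;> simp only [Matrix.cons_val_zero, Matrix.cons_val_one,
            Matrix.head_cons] at hs
          · exact Or.inl (e.injective hs)
          · exact Or.inr (e.injective hs)
      · rintro (rfl | rfl)
        · rw [← h0, jA.map_adj_iff]
          simp [P3]
        · rw [← h2, jA.map_adj_iff]
          simp [P3]
    classical
    set Φ : (Fin n ⊕ {q : PP n // q ∈ insert p E}) → D.V :=
      Sum.elim (fun i => jB (e (Sum.inl i)))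
        (fun q => if h : q.1 = p then jA 1
          else jB (e (Sum.inr ⟨q.1, (Finset.mem_insert.mp q.2).resolve_left h⟩))) with hΦ
    have hΦinl : ∀ i, Φ (Sum.inl i) = jB (e (Sum.inl i)) := fun i => rfl
    have hΦinrp : ∀ (hq : p ∈ insert p E), Φ (Sum.inr ⟨p, hq⟩) = jA 1 := by
      intro hq; simp [hΦ]
    have hΦinrq : ∀ (q : PP n) (hq : q ∈ E),
        Φ (Sum.inr ⟨q, Finset.mem_insert_of_mem hq⟩) = jB (e (Sum.inr ⟨q, hq⟩)) := by
      intro q hq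
      have hqp : q ≠ p := fun h => hp (h ▸ hq)
      simp [hΦ, hqp]
    have hΦinr : ∀ (q : PP n) (hq : q ∈ insert p E) (hqp : q ≠ p),
        Φ (Sum.inr ⟨q, hq⟩) =
          jB (e (Sum.inr ⟨q, (Finset.mem_insert.mp hq).resolve_left hqp⟩)) := by
      intro q hq hqp
      simp [hΦ, hqp]
    have hΦinj : Function.Injective Φ := by
      rintro (i | ⟨q, hq⟩) (i' | ⟨q', hq'⟩) h
      · rw [hΦinl, hΦinl] at h
        rw [Sum.inl.injEq] at *
        exact Sum.inl_injective (hBinj _ _ h)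
      · rw [hΦinl] at h
        by_cases hqp : q' = p
        · subst hqp
          rw [hΦinrp hq'] at h
          exact absurd h.symm (hint1 _)
        · rw [hΦinr q' hq' hqp] at h
          exact absurd (hBinj _ _ h) (by simp)
      · rw [hΦinl] at h
        by_cases hqp : q = p
        · subst hqp
          rw [hΦinrp hq] at h
          exact absurd h (hint1 _)
        · rw [hΦinr q hq hqp] at h
          exact absurd (hBinj _ _ h) (by simp)
      · by_cases hqp : q = p <;> by_cases hqp' : q' = p
        · subst hqp; subst hqp'; rfl
        · subst hqp
          rw [hΦinrp hq, hΦinr q' hq' hqp'] at h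
          exact absurd h (hint1 _)
        · subst hqp'
          rw [hΦinrp hq', hΦinr q hq hqp] at h
          exact absurd h.symm (hint1 _)
        · rw [hΦinr q hq hqp, hΦinr q' hq' hqp'] at h
          have := hBinj _ _ h
          simp only [Sum.inr.injEq, Subtype.mk.injEq] at this
          simp [this]
    have hΦsurj : Function.Surjective Φ := by
      intro d
      rcases hsurj d with ⟨a, ha⟩ | ⟨b, hb⟩
      · fin_cases a
        · exact ⟨Sum.inl p.1.1, by rw [hΦinl, ← h0]; exact ha⟩
        · exact ⟨Sum.inr ⟨p, Finset.mem_insert_self p E⟩, by rw [hΦinrp]; exact ha⟩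
        · exact ⟨Sum.inl p.1.2, by rw [hΦinl, ← h2]; exact ha⟩
      · obtain ⟨w, rfl⟩ := e.surjective b
        rcases w with i | ⟨q, hq⟩
        · exact ⟨Sum.inl i, by rw [hΦinl]; exact hb⟩
        · exact ⟨Sum.inr ⟨q, Finset.mem_insert_of_mem hq⟩, by rw [hΦinrq q hq]; exact hb⟩
    have key : ∀ u v, D.G.Adj (Φ u) (Φ v) ↔ (psub n (insert p E)).Adj u v := by
      have keyA1 : ∀ (i : Fin n), D.G.Adj (jA 1) (jB (e (Sum.inl i))) ↔
          (i = p.1.1 ∨ i = p.1.2) := by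
        intro i
        rw [hA1adj]
        constructor
        · rintro (h | h) <;> [exact Or.inl (Sum.inl_injective h);
            exact Or.inr (Sum.inl_injective h)]
        · rintro (rfl | rfl) <;> [exact Or.inl rfl; exact Or.inr rfl]
      rintro (i | ⟨q, hq⟩) (i' | ⟨q', hq'⟩)
      · rw [hΦinl, hΦinl, hBadj]
        simp
      · by_cases hqp : q' = p
        · subst hqp
          rw [hΦinl, hΦinrp hq', D.G.adj_comm, keyA1]
          simp
        · rw [hΦinl, hΦinr q' hq' hqp, hBadj]
          simp
      · by_cases hqp : q = p
        · subst hqp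
          rw [hΦinrp hq, hΦinl, keyA1]
          simp
        · rw [hΦinl, hΦinr q hq hqp, hBadj]
          simp
      · by_cases hqp : q = p <;> by_cases hqp' : q' = p
        · subst hqp; subst hqp'
          rw [hΦinrp hq]
          exact iff_of_false (D.G.irrefl) (by simp)
        · subst hqp
          rw [hΦinrp hq, hΦinr q' hq' hqp']
          refine iff_of_false ?_ (by simp)
          intro h
          rcases hcross _ _ h with ⟨s, hs⟩ | ⟨s, hs⟩
          · exact absurd hs (by fin_cases s <;> simp)
          · fin_cases s <;> simp only [Matrix.cons_val_zero, Matrix.cons_val_one,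
              Matrix.head_cons] at hs <;> exact absurd (e.injective hs) (by simp)
        · subst hqp'
          rw [hΦinrp hq', hΦinr q hq hqp]
          refine iff_of_false ?_ (by simp)
          intro h
          have h' := h.symm
          rcases hcross _ _ h' with ⟨s, hs⟩ | ⟨s, hs⟩
          · exact absurd hs (by fin_cases s <;> simp)
          · fin_cases s <;> simp only [Matrix.cons_val_zero, Matrix.cons_val_one,
              Matrix.head_cons] at hs <;> exact absurd (e.injective hs) (by simp)
        · rw [hΦinr q hq hqp, hΦinr q' hq' hqp', hBadj]
          simp
    exact ⟨D, hD, ⟨⟨Equiv.ofBijective Φ ⟨hΦinj, hΦsurj⟩, key _ _⟩⟩⟩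

@[simp] lemma subdivK_adj_ll (n : ℕ) (i j : Fin n) :
    ¬ (subdivK n).Adj (.inl i) (.inl j) := by
  simp [subdivK, SimpleGraph.fromRel_adj]

@[simp] lemma subdivK_adj_rr (n : ℕ) (q q' : PP n) :
    ¬ (subdivK n).Adj (.inr q) (.inr q') := by
  simp [subdivK, SimpleGraph.fromRel_adj]

@[simp] lemma subdivK_adj_lr (n : ℕ) (i : Fin n) (q : PP n) :
    (subdivK n).Adj (.inl i) (.inr q) ↔ (i = q.1.1 ∨ i = q.1.2) := by
  simp [subdivK, SimpleGraph.fromRel_adj]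

@[simp] lemma subdivK_adj_rl (n : ℕ) (i : Fin n) (q : PP n) :
    (subdivK n).Adj (.inr q) (.inl i) ↔ (i = q.1.1 ∨ i = q.1.2) := by
  rw [SimpleGraph.adj_comm]; simp

def midP {n : ℕ} (i j : Fin n) (h : i ≠ j) : PP n :=
  if hij : i < j then ⟨(i, j), hij⟩ else ⟨(j, i), by
    rcases lt_or_gt_of_ne h with h' | h'
    · exact absurd h' hij
    · exact h'⟩

lemma midP_fst (n : ℕ) (i j : Fin n) (h : i ≠ j) :
    i = (midP i j h).1.1 ∨ i = (midP i j h).1.2 := by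
  unfold midP; split <;> simp

lemma midP_snd (n : ℕ) (i j : Fin n) (h : i ≠ j) :
    j = (midP i j h).1.1 ∨ j = (midP i j h).1.2 := by
  unfold midP; split <;> simp

lemma midP_inj {n : ℕ} {i j j' : Fin n} (h : i ≠ j) (h' : i ≠ j')
    (heq : midP i j h = midP i j' h') : j = j' := by
  unfold midP at heq
  split at heq <;> split at heq <;>
    simp only [Subtype.mk.injEq, Prod.mk.injEq] at heq
  · exact heq.2
  · exact absurd heq.1 h'
  · exact absurd heq.1.symm h
  · exact heq.1

-- the index set of a vertex
def idxV {n : ℕ} : (Fin n ⊕ PP n) → Finset (Fin n) :=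
  Sum.elim (fun i => {i}) (fun q => {q.1.1, q.1.2})

lemma walk_to_idx {n : ℕ} (b : Fin n ⊕ PP n) (i : Fin n) (hi : i ∈ idxV b) :
    ∃ w : (subdivK n).Walk b (Sum.inl i), w.length ≤ 1 ∧
      ∀ x ∈ w.support, x = b ∨ x = Sum.inl i := by
  rcases b with j | q
  · simp only [idxV, Sum.elim_inl, Finset.mem_singleton] at hi
    subst hi
    exact ⟨SimpleGraph.Walk.nil, by simp⟩
  · simp only [idxV, Sum.elim_inr, Finset.mem_insert, Finset.mem_singleton] at hi
    have hadj : (subdivK n).Adj (.inr q) (.inl i) := by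
      rw [subdivK_adj_rl]; tauto
    exact ⟨SimpleGraph.Walk.cons hadj SimpleGraph.Walk.nil, by simp⟩

lemma walk_bridge {n : ℕ} (i j : Fin n) (h : i ≠ j) :
    ∃ w : (subdivK n).Walk (Sum.inl i) (Sum.inl j), w.length = 2 ∧
      ∀ x ∈ w.support, x = Sum.inl i ∨ x = Sum.inr (midP i j h) ∨ x = Sum.inl j := by
  have h1 : (subdivK n).Adj (.inl i) (.inr (midP i j h)) := by
    rw [subdivK_adj_lr]; exact midP_fst n i j h
  have h2 : (subdivK n).Adj (.inr (midP i j h)) (.inl j) := by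
    rw [subdivK_adj_rl]; exact midP_snd n i j h
  exact ⟨SimpleGraph.Walk.cons h1 (SimpleGraph.Walk.cons h2 SimpleGraph.Walk.nil),
    by simp, by intro x hx; simp at hx; tauto⟩

lemma short_walk {n k : ℕ} (S B : Finset (Fin n ⊕ PP n))
    (hdisj : Disjoint S B) (hS : S.card ≤ k) (hB : k * k + k + 2 ≤ B.card) :
    ∃ u ∈ B, ∃ v ∈ B, u ≠ v ∧ ∃ w : (subdivK n).Walk u v,
      (∀ x ∈ w.support, x ∉ S) ∧ w.length ≤ 4 := by
  classical
  have hBS : ∀ b ∈ B, b ∉ S := fun b hb hbS => (Finset.disjoint_left.mp hdisj hbS) hb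
  set good : (Fin n ⊕ PP n) → Prop :=
    fun b => ∃ i ∈ idxV b, (Sum.inl i : Fin n ⊕ PP n) ∉ S with hgood
  set B' := B.filter good with hB'
  -- bad vertices are middles with both endpoints in S
  have hbad : (B.filter (fun b => ¬ good b)).card ≤ k * k := by
    have h1 : (B.filter (fun b => ¬ good b)).card ≤ (S ×ˢ S).card := by
      apply Finset.card_le_card_of_injOn
        (Sum.elim (fun i => (Sum.inl i, Sum.inl i))
          (fun q => ((Sum.inl q.1.1 : Fin n ⊕ PP n), (Sum.inl q.1.2 : Fin n ⊕ PP n))))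
      · intro b hb
        obtain ⟨hbB, hbg⟩ := Finset.mem_filter.mp hb
        rcases b with i | q
        · exact absurd ⟨i, by simp [idxV], hBS _ hbB⟩ hbg
        · have hg1 : (Sum.inl q.1.1 : Fin n ⊕ PP n) ∈ S := by
            by_contra hc
            exact hbg ⟨q.1.1, by simp [idxV], hc⟩
          have hg2 : (Sum.inl q.1.2 : Fin n ⊕ PP n) ∈ S := by
            by_contra hc
            exact hbg ⟨q.1.2, by simp [idxV], hc⟩
          simp only [Sum.elim_inr, Finset.mem_product]
          exact Finset.mem_product.mpr ⟨hg1, hg2⟩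
      · intro b hb b' hb' heq
        obtain ⟨hbB, hbg⟩ := Finset.mem_filter.mp hb
        obtain ⟨hbB', hbg'⟩ := Finset.mem_filter.mp hb'
        rcases b with i | q
        · exact absurd ⟨i, by simp [idxV], hBS _ hbB⟩ hbg
        rcases b' with i' | q'
        · exact absurd ⟨i', by simp [idxV], hBS _ hbB'⟩ hbg'
        simp only [Sum.elim_inr, Prod.mk.injEq, Sum.inl.injEq] at heq
        exact congrArg Sum.inr (Subtype.ext (Prod.ext heq.1 heq.2))
    calc (B.filter (fun b => ¬ good b)).card ≤ (S ×ˢ S).card := h1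
      _ = S.card * S.card := Finset.card_product S S
      _ ≤ k * k := Nat.mul_le_mul hS hS
  have hsplit : B'.card + (B.filter (fun b => ¬ good b)).card = B.card :=
    Finset.card_filter_add_card_filter_not good
  have hB'card : k + 2 ≤ B'.card := by omega
  -- every b in B' has a good index; choose one
  have hch : ∀ b ∈ B', ∃ i, i ∈ idxV b ∧ (Sum.inl i : Fin n ⊕ PP n) ∉ S := by
    intro b hb
    obtain ⟨-, hbg⟩ := Finset.mem_filter.mp hb
    obtain ⟨i, hi1, hi2⟩ := hbg
    exact ⟨i, hi1, hi2⟩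
  have hB'ne : B'.Nonempty := Finset.card_pos.mp (by omega)
  obtain ⟨b₀, hb₀⟩ := hB'ne
  obtain ⟨i₀', -, -⟩ := hch b₀ hb₀
  set φ : (Fin n ⊕ PP n) → Fin n :=
    fun b => if h : ∃ i, i ∈ idxV b ∧ (Sum.inl i : Fin n ⊕ PP n) ∉ S then h.choose else i₀'
    with hφdef
  have hφ : ∀ b ∈ B', φ b ∈ idxV b ∧ (Sum.inl (φ b) : Fin n ⊕ PP n) ∉ S := by
    intro b hb
    have h := hch b hb
    simp only [hφdef, dif_pos h]
    exact h.choose_spec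
  by_cases hinj : Set.InjOn φ B'
  · -- φ injective : many distinct good indices, find an unblocked middle
    set T := B'.image φ with hT
    have hTcard : T.card = B'.card := Finset.card_image_of_injOn hinj
    obtain ⟨i₀, hi₀T⟩ : T.Nonempty := Finset.card_pos.mp (by omega)
    set mid' : Fin n → (Fin n ⊕ PP n) :=
      fun i => if h : i₀ = i then Sum.inl i₀ else Sum.inr (midP i₀ i h) with hmid'
    set T' := (T.erase i₀).image mid' with hT'
    have hT'card : T'.card = (T.erase i₀).card := by
      apply Finset.card_image_of_injOn
      intro i hi i' hi' heq
      have hne : i₀ ≠ i := fun h => (Finset.mem_erase.mp hi).1 h.symm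
      have hne' : i₀ ≠ i' := fun h => (Finset.mem_erase.mp hi').1 h.symm
      rw [hmid'] at heq
      simp only [dif_neg hne, dif_neg hne', Sum.inr.injEq] at heq
      exact midP_inj hne hne' heq
    have herase : k + 1 ≤ (T.erase i₀).card := by
      rw [Finset.card_erase_of_mem hi₀T]; omega
    have hnotsub : ¬ T' ⊆ S := by
      intro hsub
      have := Finset.card_le_card hsub
      omega
    obtain ⟨t, htT', htS⟩ := Finset.not_subset.mp hnotsub
    obtain ⟨i₁, hi₁, rfl⟩ := Finset.mem_image.mp htT'
    have hne : i₀ ≠ i₁ := fun h => (Finset.mem_erase.mp hi₁).1 h.symm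
    rw [show mid' i₁ = Sum.inr (midP i₀ i₁ hne) from dif_neg hne] at htS
    obtain ⟨b₁, hb₁, hφb₁⟩ := Finset.mem_image.mp hi₀T
    obtain ⟨b₂, hb₂, hφb₂⟩ := Finset.mem_image.mp (Finset.mem_erase.mp hi₁).2
    have hbne : b₁ ≠ b₂ := by
      intro h; subst h; rw [hφb₁] at hφb₂; exact hne hφb₂
    obtain ⟨hb₁i, hb₁S⟩ := hφ b₁ hb₁
    obtain ⟨hb₂i, hb₂S⟩ := hφ b₂ hb₂
    rw [hφb₁] at hb₁i hb₁S
    rw [hφb₂] at hb₂i hb₂S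
    obtain ⟨w₁, hw₁len, hw₁sup⟩ := walk_to_idx b₁ i₀ hb₁i
    obtain ⟨wb, hwblen, hwbsup⟩ := walk_bridge i₀ i₁ hne
    obtain ⟨w₂, hw₂len, hw₂sup⟩ := walk_to_idx b₂ i₁ hb₂i
    refine ⟨b₁, (Finset.mem_filter.mp hb₁).1, b₂, (Finset.mem_filter.mp hb₂).1, hbne,
      w₁.append (wb.append w₂.reverse), ?_, ?_⟩
    · intro x hx
      rw [SimpleGraph.Walk.mem_support_append_iff] at hx
      rcases hx with hx | hx
      · rcases hw₁sup x hx with rfl | rfl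
        · exact hBS _ (Finset.mem_filter.mp hb₁).1
        · exact hb₁S
      rw [SimpleGraph.Walk.mem_support_append_iff] at hx
      rcases hx with hx | hx
      · rcases hwbsup x hx with rfl | rfl | rfl
        · exact hb₁S
        · exact htS
        · exact hb₂S
      · rw [SimpleGraph.Walk.support_reverse, List.mem_reverse] at hx
        rcases hw₂sup x hx with rfl | rfl
        · exact hBS _ (Finset.mem_filter.mp hb₂).1
        · exact hb₂S
    · simp only [SimpleGraph.Walk.length_append, SimpleGraph.Walk.length_reverse]
      omega
  · -- φ not injective : two vertices share a good index
    rw [Set.InjOn] at hinj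
    push_neg at hinj
    obtain ⟨b₁, hb₁, b₂, hb₂, heq, hbne⟩ := hinj
    rw [Finset.mem_coe] at hb₁ hb₂
    obtain ⟨hb₁i, hb₁S⟩ := hφ b₁ hb₁
    obtain ⟨hb₂i, hb₂S⟩ := hφ b₂ hb₂
    rw [heq] at hb₁i
    obtain ⟨w₁, hw₁len, hw₁sup⟩ := walk_to_idx b₁ (φ b₂) hb₁i
    obtain ⟨w₂, hw₂len, hw₂sup⟩ := walk_to_idx b₂ (φ b₂) hb₂i
    refine ⟨b₁, (Finset.mem_filter.mp hb₁).1, b₂, (Finset.mem_filter.mp hb₂).1, hbne,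
      w₁.append w₂.reverse, ?_, ?_⟩
    · intro x hx
      rw [SimpleGraph.Walk.mem_support_append_iff] at hx
      rcases hx with hx | hx
      · rcases hw₁sup x hx with rfl | rfl
        · exact hBS _ (Finset.mem_filter.mp hb₁).1
        · exact hb₂S
      · rw [SimpleGraph.Walk.support_reverse, List.mem_reverse] at hx
        rcases hw₂sup x hx with rfl | rfl
        · exact hBS _ (Finset.mem_filter.mp hb₂).1
        · exact hb₂S
    · simp only [SimpleGraph.Walk.length_append, SimpleGraph.Walk.length_reverse]
      omega

lemma subdivK_iso_psub (n : ℕ) : Nonempty (subdivK n ≃g psub n Finset.univ) := by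
  refine ⟨⟨(Equiv.refl (Fin n)).sumCongr
    (Equiv.subtypeUnivEquiv (fun q => Finset.mem_univ q)).symm, ?_⟩⟩
  rintro (i | q) (j | q') <;>
    simp [Equiv.sumCongr_apply, Equiv.subtypeUnivEquiv]

/-- Every hereditary class of finite graphs closed under free
amalgamation over arbitrary vertex subsets which contains a graph with at least one edge
contains, for every `n`, the 1-subdivision of `K n` (up to isomorphism); consequently
such a class is not quasi-wide. -/
theorem amalgamation_closed_contains_subdivided_cliques (C : Set BG)
    (hher : GHereditary C) (hamal : FreeAmalgamationClosed C)
    (hedge : ∃ A ∈ C, ∃ u v, A.G.Adj u v) :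
    (∀ n : ℕ, ∃ D ∈ C, Nonempty (subdivK n ≃g D.G)) ∧ ¬ QuasiWide C := by
  classical
  have hsub : ∀ n : ℕ, ∃ D ∈ C, Nonempty (subdivK n ≃g D.G) := by
    intro n
    obtain ⟨D, hD, ⟨e⟩⟩ := psub_mem hher hamal hedge n Finset.univ
    obtain ⟨e₀⟩ := subdivK_iso_psub n
    exact ⟨D, hD, ⟨e₀.trans e⟩⟩
  refine ⟨hsub, ?_⟩
  intro hqw
  obtain ⟨k, f, hk⟩ := hqw 4
  obtain ⟨D, hD, ⟨e⟩⟩ := hsub (f (k * k + k + 2))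
  set n := f (k * k + k + 2) with hn
  have hcard : f (k * k + k + 2) ≤ Fintype.card D.V := by
    rw [← Fintype.card_congr e.toEquiv]
    calc f (k * k + k + 2) = n := rfl
      _ ≤ n + Fintype.card (PP n) := Nat.le_add_right _ _
      _ = Fintype.card (Fin n ⊕ PP n) := by simp [Fintype.card_sum]
  obtain ⟨S, B, hdisj, hScard, hBcard, hindep⟩ := hk (k * k + k + 2) D hD hcard
  set S₀ := S.image (⇑e.symm) with hS₀def
  set B₀ := B.image (⇑e.symm) with hB₀def
  have hsymminj : Function.Injective (⇑e.symm) := e.symm.injective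
  have hdisj₀ : Disjoint S₀ B₀ := by
    rw [hS₀def, hB₀def, Finset.disjoint_image hsymminj]
    exact hdisj
  have hS₀card : S₀.card ≤ k := le_trans Finset.card_image_le hScard
  have hB₀card : k * k + k + 2 ≤ B₀.card := by
    rw [hB₀def, Finset.card_image_of_injective _ hsymminj]
    exact hBcard
  obtain ⟨u, hu, v, hv, huv, w, hwS, hwlen⟩ := short_walk S₀ B₀ hdisj₀ hS₀card hB₀card
  obtain ⟨u', hu', rfl⟩ := Finset.mem_image.mp hu
  obtain ⟨v', hv', rfl⟩ := Finset.mem_image.mp hv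
  have huv' : u' ≠ v' := fun h => huv (by rw [h])
  have hu'' : e (e.symm u') = u' := e.apply_symm_apply u'
  have hv'' : e (e.symm v') = v' := e.apply_symm_apply v'
  let w' : D.G.Walk u' v' := (w.map e.toHom).copy hu'' hv''
  have hlen' : w'.length = w.length := by
    simp [w', SimpleGraph.Walk.length_copy, SimpleGraph.Walk.length_map]
  have hsupp : ∀ x ∈ w'.support, x ∉ S := by
    intro x hx hxS
    rw [show w'.support = (w.map e.toHom).support from SimpleGraph.Walk.support_copy _ _ _,
      SimpleGraph.Walk.support_map, List.mem_map] at hx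
    obtain ⟨y, hy, rfl⟩ := hx
    apply hwS y hy
    rw [hS₀def, Finset.mem_image]
    refine ⟨e.toHom y, hxS, ?_⟩
    exact e.symm_apply_apply y
  have := hindep u' hu' v' hv' huv' w' hsupp
  omega
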